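/- Let P ⊆ Q be fs monoids (finitely generated, cancellative, torsion-free, saturated) with the inclusion exact (P = Q ∩ P^gp in Q^gp), and let q̃ ∈ Q^gp/P^gp be such that the fiber Q_{q̃} = {q ∈ Q : q ↦ q̃} is nonempty. Then there exist p ∈ P and q ∈ Q_{q̃} such that p + Q_{q̃} ⊆ q + P. -/

import Mathlib

open Classical in
/-- A PWO set admits a finite "basis": finitely many elements below everything. -/
theorem isPWO_exists_finite_basis {α : Type*} [Preorder α] {s : Set α} (h : s.IsPWO)
    (hne : s.Nonempty) :
    ∃ B : Finset α, (↑B : Set α) ⊆ s ∧ ∀ x ∈ s, ∃ b ∈ B, b ≤ x := by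
  by_contra hcon
  push_neg at hcon
  -- a choice function: for any finset contained in `s` that is not a basis, pick a bad element
  have hpick : ∀ B : Finset α, (↑B : Set α) ⊆ s → ∃ x ∈ s, ∀ b ∈ B, ¬ b ≤ x := by
    intro B hB
    obtain ⟨x, hx, hxb⟩ := hcon B hB
    exact ⟨x, hx, hxb⟩
  -- build an increasing sequence of finsets, each extended by a bad element
  let pick : ∀ B : Finset α, (↑B : Set α) ⊆ s → α := fun B hB => (hpick B hB).choose
  have hpick_mem : ∀ B hB, pick B hB ∈ s := fun B hB => (hpick B hB).choose_spec.1
  have hpick_bad : ∀ B hB, ∀ b ∈ B, ¬ b ≤ pick B hB := fun B hB => (hpick B hB).choose_spec.2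
  let Bs : ℕ → {B : Finset α // (↑B : Set α) ⊆ s} := fun n =>
    Nat.rec ⟨∅, by simp⟩
      (fun _ p => ⟨insert (pick p.1 p.2) p.1, by
        intro x hx
        simp only [Finset.coe_insert, Set.mem_insert_iff] at hx
        rcases hx with rfl | hx
        · exact hpick_mem p.1 p.2
        · exact p.2 hx⟩) n
  let f : ℕ → α := fun n => pick (Bs n).1 (Bs n).2
  have hBs_succ : ∀ n, (Bs (n + 1)).1 = insert (f n) (Bs n).1 := fun n => rfl
  have hBs_mono : ∀ m n, m ≤ n → (Bs m).1 ⊆ (Bs n).1 := by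
    intro m n hmn
    induction n with
    | zero => simp [Nat.le_zero.mp hmn]
    | succ k ih =>
      rcases Nat.lt_or_ge m (k + 1) with hlt | hge
      · exact (ih (Nat.lt_succ_iff.mp hlt)).trans (by rw [hBs_succ]; exact Finset.subset_insert _ _)
      · have : m = k + 1 := le_antisymm hmn hge
        subst this; exact Finset.Subset.refl _
  have hf_mem : ∀ n, f n ∈ s := fun n => hpick_mem (Bs n).1 (Bs n).2
  have hf_bad : ∀ m n, m < n → ¬ f m ≤ f n := by
    intro m n hmn
    have hmem : f m ∈ (Bs n).1 := by
      have : f m ∈ (Bs (m + 1)).1 := by rw [hBs_succ]; exact Finset.mem_insert_self _ _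
      exact hBs_mono (m + 1) n hmn this
    exact hpick_bad (Bs n).1 (Bs n).2 (f m) hmem
  obtain ⟨m, n, hmn, hle⟩ := Set.PartiallyWellOrderedOn.exists_lt h hf_mem
  exact hf_bad m n hmn hle

/-- Elements of the subgroup closure of an additive submonoid are differences. -/
theorem mem_addSubgroup_closure_submonoid {G : Type*} [AddCommGroup G] (P : AddSubmonoid G)
    {g : G} (hg : g ∈ AddSubgroup.closure (P : Set G)) :
    ∃ a ∈ P, ∃ b ∈ P, g = a - b := by
  induction hg using AddSubgroup.closure_induction with
  | mem x hx => exact ⟨x, hx, 0, P.zero_mem, by simp⟩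
  | zero => exact ⟨0, P.zero_mem, 0, P.zero_mem, by simp⟩
  | add x y hx hy ihx ihy =>
    obtain ⟨a, ha, b, hb, rfl⟩ := ihx
    obtain ⟨c, hc, d, hd, rfl⟩ := ihy
    exact ⟨a + c, P.add_mem ha hc, b + d, P.add_mem hb hd, by abel⟩
  | neg x hx ihx =>
    obtain ⟨a, ha, b, hb, rfl⟩ := ihx
    exact ⟨b, hb, a, ha, by abel⟩

/-- For an exact inclusion `P ⊆ Q` of fs monoids (realized as finitely generated,
saturated submonoids of a torsion-free abelian group `G`), any nonempty fiber `Q_q̃`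
of `Q → Q^gp/P^gp` admits `p ∈ P` and `q ∈ Q_q̃` with `p + Q_q̃ ⊆ q + P`. -/
theorem stmt9 (G : Type*) [AddCommGroup G] [NoZeroSMulDivisors ℤ G]
    (P Q : AddSubmonoid G) (hPQ : P ≤ Q)
    (hPfg : P.FG) (hQfg : Q.FG)
    (hPsat : ∀ (x : G) (n : ℕ), 0 < n →
      x ∈ AddSubgroup.closure (P : Set G) → n • x ∈ P → x ∈ P)
    (hQsat : ∀ (x : G) (n : ℕ), 0 < n →
      x ∈ AddSubgroup.closure (Q : Set G) → n • x ∈ Q → x ∈ Q)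
    (hexact : ∀ x ∈ Q, x ∈ AddSubgroup.closure (P : Set G) → x ∈ P)
    (q₀ : G) (hq₀ : q₀ ∈ Q) :
    ∃ p ∈ P, ∃ q : G, (q ∈ Q ∧ q - q₀ ∈ AddSubgroup.closure (P : Set G)) ∧
      ∀ x : G, (x ∈ Q ∧ x - q₀ ∈ AddSubgroup.closure (P : Set G)) →
        ∃ p' ∈ P, p + x = q + p' := by
  classical
  set K := AddSubgroup.closure (P : Set G) with hK
  obtain ⟨T, hT⟩ := hQfg
  -- parametrize Q by (↥T → ℕ)
  set π : ({x // x ∈ T} → ℕ) → G := fun v => ∑ t : {x // x ∈ T}, v t • (t : G) with hπ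
  have hπ_add : ∀ v w, π (v + w) = π v + π w := by
    intro v w
    simp [hπ, add_smul, Finset.sum_add_distrib]
  have hπQ : ∀ v, π v ∈ Q := by
    intro v
    refine AddSubmonoid.sum_mem Q fun t _ => AddSubmonoid.nsmul_mem Q ?_ _
    rw [← hT]
    exact AddSubmonoid.subset_closure t.2
  have hπ_surj : ∀ x ∈ Q, ∃ v, π v = x := by
    intro x hx
    rw [← hT] at hx
    induction hx using AddSubmonoid.closure_induction with
    | mem y hy =>
      refine ⟨Pi.single ⟨y, hy⟩ 1, ?_⟩
      simp only [hπ, Pi.single_apply, ite_smul, one_smul, zero_smul]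
      simp [Finset.sum_ite_eq', Finset.sum_ite_eq]
    | zero => exact ⟨0, by simp [hπ]⟩
    | add a b _ _ iha ihb =>
      obtain ⟨v, rfl⟩ := iha
      obtain ⟨w, rfl⟩ := ihb
      exact ⟨v + w, hπ_add v w⟩
  -- the fiber, pulled back to ℕ^T, and Dickson's lemma
  set S : Set ({x // x ∈ T} → ℕ) := {v | π v - q₀ ∈ K} with hS
  have hSne : S.Nonempty := by
    obtain ⟨v, hv⟩ := hπ_surj q₀ hq₀
    exact ⟨v, by simp only [hS, Set.mem_setOf_eq, hv, sub_self]; exact zero_mem K⟩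
  obtain ⟨B, hBS, hBbasis⟩ := isPWO_exists_finite_basis
    ((Set.IsPWO.pi (s := fun _ : {x // x ∈ T} => (Set.univ : Set ℕ))
      (fun _ => Set.isPWO_of_wellQuasiOrderedLE _)).mono (fun _ _ => by simp)) hSne
  -- write each basis point (relative to q₀) as a difference of elements of P
  have hdiff : ∀ b ∈ B, ∃ a ∈ P, ∃ c ∈ P, π b - q₀ = a - c := by
    intro b hb
    exact mem_addSubgroup_closure_submonoid P (hBS hb)
  choose! a ha c hc hac using hdiff
  refine ⟨∑ b ∈ B, c b, AddSubmonoid.sum_mem P fun b hb => hc b hb, q₀, ⟨hq₀, by rw [sub_self]; exact zero_mem K⟩, ?_⟩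
  rintro x ⟨hxQ, hxK⟩
  obtain ⟨v, rfl⟩ := hπ_surj x hxQ
  have hvS : v ∈ S := hxK
  obtain ⟨b, hbB, hbv⟩ := hBbasis v hvS
  -- split x = π b + π (v - b)
  have hsplit : π v = π b + π (v - b) := by
    rw [← hπ_add]
    congr 1
    funext t
    simp [Nat.add_sub_cancel' (hbv t)]
  have huQ : π (v - b) ∈ Q := hπQ _
  have huK : π (v - b) ∈ K := by
    have h1 : π v - q₀ ∈ K := hxK
    have h2 : π b - q₀ ∈ K := hBS hbB
    have : (π v - q₀) - (π b - q₀) ∈ K := AddSubgroup.sub_mem K h1 h2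
    have heq : (π v - q₀) - (π b - q₀) = π (v - b) := by
      rw [hsplit]; abel
    rwa [heq] at this
  have huP : π (v - b) ∈ P := hexact _ huQ huK
  refine ⟨(∑ b' ∈ B.erase b, c b') + a b + π (v - b), ?_, ?_⟩
  · exact P.add_mem (P.add_mem (AddSubmonoid.sum_mem P fun b' hb' =>
      hc b' (Finset.mem_of_mem_erase hb')) (ha b hbB)) huP
  · have hsum : ∑ b' ∈ B, c b' = c b + ∑ b' ∈ B.erase b, c b' :=
      (Finset.add_sum_erase B c hbB).symm
    have key : π b = a b + q₀ - c b := by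
      have h := hac b hbB
      exact eq_sub_of_add_eq (sub_eq_sub_iff_add_eq_add.mp h)
    rw [hsum, hsplit, key]
    abel
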